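/- For every even p ≥ 2 and every odd n ≥ p+2, there exists a simple graph on n vertices with one vertex of degree n−1 and n−1 vertices of degree p. -/

import Mathlib

open SimpleGraph Finset

def circT (m k : ℕ) : Finset ℕ := (Finset.Icc 1 k ∪ Finset.Icc (m-k) (m-1)) ∪ {m/2}
def circS (m k : ℕ) : Finset (ZMod m) := (circT m k).image (Nat.cast)

lemma mem_circT {m k a : ℕ} :
    a ∈ circT m k ↔ (1 ≤ a ∧ a ≤ k) ∨ (m - k ≤ a ∧ a ≤ m - 1) ∨ a = m / 2 := by
  simp [circT, Finset.mem_union, Finset.mem_Icc, or_assoc]; tauto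

lemma circT_bound {m k a : ℕ} (hm : k + 2 ≤ m / 2) (hme : Even m) (ha : a ∈ circT m k) :
    1 ≤ a ∧ a < m := by
  obtain ⟨t, ht⟩ := hme
  rw [mem_circT] at ha
  omega

lemma zero_not_mem_circS {m k : ℕ} (hm : k + 2 ≤ m / 2) (hme : Even m) :
    (0 : ZMod m) ∉ circS m k := by
  intro h
  rw [circS, Finset.mem_image] at h
  obtain ⟨a, ha, hcast⟩ := h
  have ha' := circT_bound hm hme ha
  have h2 : (a : ZMod m).val = a := ZMod.val_cast_of_lt ha'.2
  rw [hcast] at h2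
  have h0 : (0 : ZMod m).val = 0 := by
    haveI : NeZero m := ⟨by omega⟩
    simp
  omega

lemma neg_mem_circS {m k : ℕ} (hm : k + 2 ≤ m / 2) (hme : Even m) {x : ZMod m}
    (hx : x ∈ circS m k) : -x ∈ circS m k := by
  rw [circS, Finset.mem_image] at hx ⊢
  obtain ⟨a, ha, rfl⟩ := hx
  refine ⟨m - a, ?_, ?_⟩
  · have ha' := circT_bound hm hme ha
    obtain ⟨t, ht⟩ := hme
    rw [mem_circT] at ha ⊢
    omega
  · have ha' := circT_bound hm hme ha
    push_cast [Nat.cast_sub (le_of_lt ha'.2)]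
    simp

lemma card_circS {m k : ℕ} (hm : k + 2 ≤ m / 2) (hme : Even m) :
    (circS m k).card = 2 * k + 1 := by
  have hcT : (circT m k).card = 2 * k + 1 := by
    obtain ⟨t, ht⟩ := hme
    rw [circT, Finset.card_union_of_disjoint, Finset.card_union_of_disjoint]
    · rw [Nat.card_Icc, Nat.card_Icc, Finset.card_singleton]; omega
    · rw [Finset.disjoint_left]; intro a h1 h2
      rw [Finset.mem_Icc] at h1 h2; omega
    · rw [Finset.disjoint_left]; intro a h1 h2
      rw [Finset.mem_union, Finset.mem_Icc, Finset.mem_Icc] at h1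
      rw [Finset.mem_singleton] at h2; omega
  rw [circS, Finset.card_image_of_injOn, hcT]
  intro a ha b hb hab
  have ha' := circT_bound hm hme ha
  have hb' := circT_bound hm hme hb
  have h1 : ((a : ZMod m)).val = a := ZMod.val_cast_of_lt ha'.2
  have h2 : ((b : ZMod m)).val = b := ZMod.val_cast_of_lt hb'.2
  rw [← h1, hab, h2]

def myG (n k : ℕ) : SimpleGraph (Fin n) where
  Adj u v := u ≠ v ∧ (u.val = 0 ∨ v.val = 0 ∨
    ((u.val : ZMod (n-1)) - (v.val : ZMod (n-1)) ∈ circS (n-1) k) ∨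
    ((v.val : ZMod (n-1)) - (u.val : ZMod (n-1)) ∈ circS (n-1) k))
  symm := by
    constructor
    intro u v ⟨h1, h2⟩
    exact ⟨h1.symm, by tauto⟩
  loopless := ⟨fun v h => h.1 rfl⟩

instance (n k : ℕ) : DecidableRel (myG n k).Adj := fun _ _ =>
  inferInstanceAs (Decidable (_ ∧ _))

lemma myG_degree_zero (n k : ℕ) [NeZero n] : (myG n k).degree 0 = n - 1 := by
  rw [← SimpleGraph.card_neighborFinset_eq_degree, SimpleGraph.neighborFinset_eq_filter]
  have h : Finset.filter ((myG n k).Adj 0) Finset.univ = Finset.univ.erase 0 := by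
    ext u
    simp only [Finset.mem_filter, Finset.mem_univ, true_and, Finset.mem_erase, and_true]
    constructor
    · rintro ⟨h1, -⟩; exact Ne.symm h1
    · intro h1; exact ⟨Ne.symm h1, Or.inl rfl⟩
  rw [h, Finset.card_erase_of_mem (Finset.mem_univ 0), Finset.card_univ, Fintype.card_fin]

lemma myG_degree_ne (n k : ℕ) [NeZero n] (hm : k + 2 ≤ (n-1) / 2) (hme : Even (n-1))
    (v : Fin n) (hv : v ≠ 0) : (myG n k).degree v = 2 * k + 2 := by
  set m := n - 1 with hmdef
  haveI : NeZero m := ⟨by omega⟩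
  have hnm : m < n := by
    have := Nat.pos_of_ne_zero (NeZero.ne n); omega
  have hm4 : 4 ≤ m := by omega
  set c : ZMod m := (v.val : ZMod m) with hc
  have hvval : v.val ≠ 0 := fun h => hv (Fin.ext (by simpa using h))
  have hvlt : v.val ≤ m := by have := v.isLt; omega
  -- ψ and j
  set ψ : Fin n → ZMod m := fun u => (u.val : ZMod m) with hψ
  set j : ZMod m → Fin n := fun x => ⟨if x.val = 0 then m else x.val, by
    split
    · exact hnm
    · exact lt_trans (ZMod.val_lt x) hnm⟩ with hj
  have hψj : ∀ x : ZMod m, ψ (j x) = x := by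
    intro x
    by_cases h0 : x.val = 0
    · have hx0 : x = 0 := (ZMod.val_eq_zero x).mp h0
      show (((if x.val = 0 then m else x.val : ℕ)) : ZMod m) = x
      rw [if_pos h0, ZMod.natCast_self, hx0]
    · show (((if x.val = 0 then m else x.val : ℕ)) : ZMod m) = x
      rw [if_neg h0]
      exact ZMod.natCast_rightInverse x
  have hjψ : ∀ u : Fin n, u ≠ 0 → j (ψ u) = u := by
    intro u hu
    have huval : u.val ≠ 0 := fun h => hu (Fin.ext (by simpa using h))
    have hule : u.val ≤ m := by have := u.isLt; omega
    apply Fin.ext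
    by_cases h : u.val = m
    · have : (ψ u).val = 0 := by
        simp only [hψ, ZMod.val_natCast, h, Nat.mod_self]
      show (if (ψ u).val = 0 then m else (ψ u).val) = u.val
      rw [if_pos this, h]
    · have hlt : u.val < m := by omega
      have : (ψ u).val = u.val := by
        simp only [hψ, ZMod.val_natCast, Nat.mod_eq_of_lt hlt]
      show (if (ψ u).val = 0 then m else (ψ u).val) = u.val
      rw [if_neg (by rw [this]; exact huval), this]
  -- neighbor set
  set A : Finset (Fin n) := Finset.univ.filter
    (fun u => u ≠ 0 ∧ u ≠ v ∧ ψ u - c ∈ circS m k) with hA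
  have hnbr : (myG n k).neighborFinset v = insert 0 A := by
    ext u
    rw [SimpleGraph.mem_neighborFinset, Finset.mem_insert, hA, Finset.mem_filter]
    constructor
    · rintro ⟨hne, h⟩
      by_cases hu0 : u = 0
      · exact Or.inl hu0
      · have huval : u.val ≠ 0 := fun h' => hu0 (Fin.ext (by simpa using h'))
        refine Or.inr ⟨Finset.mem_univ u, hu0, hne.symm, ?_⟩
        rcases h with h | h | h | h
        · exact absurd h hvval
        · exact absurd h huval
        · have heq : c - ψ u = -(ψ u - c) := by ring
          rw [heq] at h
          have := neg_mem_circS hm hme h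
          simpa using this
        · exact h
    · rintro (rfl | ⟨-, hu0, huv, hcond⟩)
      · exact ⟨hv, Or.inr (Or.inl (by simp))⟩
      · exact ⟨huv.symm, Or.inr (Or.inr (Or.inr hcond))⟩
  have h0A : (0 : Fin n) ∉ A := by
    rw [hA, Finset.mem_filter]; rintro ⟨-, h, -⟩; exact h rfl
  have hcardA : A.card = 2 * k + 1 := by
    rw [← card_circS hm hme]
    have himg : ((circS m k).image (· + c)).card = (circS m k).card :=
      Finset.card_image_of_injective _ (add_left_injective c)
    rw [← himg]
    apply Finset.card_nbij' ψ j
    · intro u hu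
      rw [Finset.mem_coe, hA, Finset.mem_filter] at hu
      obtain ⟨-, hu0, huv, hcond⟩ := hu
      rw [Finset.mem_coe, Finset.mem_image]
      exact ⟨ψ u - c, hcond, by show (ψ u - c) + c = ψ u; ring⟩
    · intro x hx
      rw [Finset.mem_coe, Finset.mem_image] at hx
      obtain ⟨s, hs, rfl⟩ := hx
      rw [Finset.mem_coe, hA, Finset.mem_filter]
      have hjx : ψ (j (s + c)) = s + c := hψj _
      have hs0 : s ≠ 0 := fun h => zero_not_mem_circS hm hme (h ▸ hs)
      refine ⟨Finset.mem_univ _, ?_, ?_, ?_⟩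
      · intro h
        have h' : (j (s + c)).val = 0 := by rw [h]; simp
        simp only [hj] at h'
        split at h' <;> omega
      · intro h
        have heq : s + c = c := by rw [← hjx, h]
        apply hs0
        rw [← add_sub_cancel_right s c, heq, sub_self]
      · rw [hjx]
        have heq : s + c - c = s := by ring
        rw [heq]; exact hs
    · intro u hu
      rw [Finset.mem_coe, hA, Finset.mem_filter] at hu
      exact hjψ u hu.2.1
    · intro x _
      exact hψj x
  rw [← SimpleGraph.card_neighborFinset_eq_degree, hnbr,
    Finset.card_insert_of_notMem h0A, hcardA]

/-- The multiset of vertex degrees of a finite simple graph. -/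
def degMS {m : ℕ} (G : SimpleGraph (Fin m)) [DecidableRel G.Adj] : Multiset ℕ :=
  (Finset.univ : Finset (Fin m)).val.map fun v => G.degree v

/-- `G` contains `K_{p,1,1}` (complete tripartite with parts `p,1,1`) as a subgraph:
there are adjacent vertices `u, v` and `p` further vertices each adjacent to both. -/
def ContainsKp11 {V : Type*} (G : SimpleGraph V) (p : ℕ) : Prop :=
  ∃ u v : V, G.Adj u v ∧ ∃ s : Finset V, s.card = p ∧ u ∉ s ∧ v ∉ s ∧
    ∀ w ∈ s, G.Adj u w ∧ G.Adj v w

theorem stmt_5 (p n : ℕ) (heven : Even p) (hp : 2 ≤ p) (hodd : Odd n) (hn : p + 2 ≤ n) :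
    ∃ (H : SimpleGraph (Fin n)) (_ : DecidableRel H.Adj),
      degMS H = (n - 1) ::ₘ Multiset.replicate (n - 1) p := by
  obtain ⟨t, ht⟩ := heven
  obtain ⟨w, hw⟩ := hodd
  set k := t - 1 with hk
  have hp2 : p = 2 * k + 2 := by omega
  haveI : NeZero n := ⟨by omega⟩
  have hme : Even (n - 1) := ⟨w, by omega⟩
  have hm : k + 2 ≤ (n - 1) / 2 := by omega
  refine ⟨myG n k, inferInstance, ?_⟩
  rw [degMS]
  have h0mem : (0 : Fin n) ∈ (Finset.univ : Finset (Fin n)).val :=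
    Finset.mem_def.mp (Finset.mem_univ 0)
  have huniv : (Finset.univ : Finset (Fin n)).val
      = 0 ::ₘ ((Finset.univ : Finset (Fin n)).val.erase 0) :=
    (Multiset.cons_erase h0mem).symm
  rw [huniv, Multiset.map_cons, myG_degree_zero]
  congr 1
  apply Multiset.eq_replicate.mpr
  constructor
  · rw [Multiset.card_map, Multiset.card_erase_of_mem h0mem]
    have : Multiset.card (Finset.univ : Finset (Fin n)).val = n := by
      rw [← Finset.card_def, Finset.card_univ, Fintype.card_fin]
    rw [this, Nat.pred_eq_sub_one]
  · intro b hb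
    rw [Multiset.mem_map] at hb
    obtain ⟨u, hu, rfl⟩ := hb
    have hnd : ((Finset.univ : Finset (Fin n)).val).Nodup := Finset.univ.nodup
    have hu0 : u ≠ 0 := ((Multiset.Nodup.mem_erase_iff hnd).mp hu).1
    rw [hp2]
    exact myG_degree_ne n k hm hme u hu0
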